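/- Let G be a finite simple graph and f a uniformly random labeling with fixed label counts. For distinct labels i != j, Cov(R_{ii}, R_{jj}) = (|G|^2 - sum_t |G_t|^2 + |G|) * n_i n_j (n_i - 1)(n_j - 1)/(N(N-1)(N-2)(N-3)) - E(R_{ii}) E(R_{jj}), where E(R_{kk}) = |G| n_k(n_k-1)/(N(N-1)). -/

import Mathlib

open Finset

variable {V : Type*} [Fintype V] [DecidableEq V] {K : ℕ}

/-- The set of labelings `f : V → Fin K` with exactly `n k` vertices labeled `k`. -/
def labelings (n : Fin K → ℕ) : Finset (V → Fin K) :=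
  Finset.univ.filter fun f => ∀ k, (Finset.univ.filter fun x => f x = k).card = n k

/-- Probability of an event under the uniform distribution on `labelings n`. -/
noncomputable def prob (n : Fin K → ℕ) (P : (V → Fin K) → Prop) [DecidablePred P] : ℝ :=
  (((labelings n).filter P).card : ℝ) / (((labelings n : Finset (V → Fin K))).card : ℝ)

/-- Expectation of a real random variable under the uniform distribution on `labelings n`. -/
noncomputable def expect (n : Fin K → ℕ) (X : (V → Fin K) → ℝ) : ℝ :=
  (∑ f ∈ labelings n, X f) / (((labelings n : Finset (V → Fin K))).card : ℝ)

/-- Covariance under the uniform distribution on `labelings n`. -/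
noncomputable def covar (n : Fin K → ℕ) (X Y : (V → Fin K) → ℝ) : ℝ :=
  expect n (fun f => (X f - expect n X) * (Y f - expect n Y))

/-- `Rcount G f i j` is the number of edges of `G` whose endpoint labels (under `f`)
are exactly the unordered pair `{i, j}`. -/
def Rcount (G : SimpleGraph V) [DecidableRel G.Adj] (f : V → Fin K) (i j : Fin K) : ℕ :=
  (G.edgeFinset.filter fun e => Sym2.map f e = s(i, j)).card

-- step 1
lemma comp_mem_labelings (n : Fin K → ℕ) (σ : Equiv.Perm V) (f : V → Fin K) :
    f ∘ σ ∈ labelings n ↔ f ∈ labelings n := by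
  simp only [labelings, mem_filter, mem_univ, true_and]
  refine forall_congr' fun k => ?_
  have hcc : (Finset.univ.filter fun x => (f ∘ σ) x = k).card
      = (Finset.univ.filter fun x => f x = k).card := by
    apply Finset.card_bij (fun x _ => σ x)
    · intro a ha; simpa using (by simpa using ha : f (σ a) = k)
    · intro a _ b _ h; exact σ.injective h
    · intro b hb; exact ⟨σ.symm b, by simpa using hb, by simp⟩
  rw [hcc]

-- step 2
lemma card_filter_comp (n : Fin K → ℕ) (σ : Equiv.Perm V) (P : (V → Fin K) → Prop)
    [DecidablePred P] :
    ((labelings (V:=V) n).filter fun f => P (f ∘ σ)).card = ((labelings (V:=V) n).filter P).card := by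
  apply Finset.card_bij (fun f _ => f ∘ σ)
  · intro f hf
    simp only [mem_filter] at hf ⊢
    exact ⟨(comp_mem_labelings n σ f).mpr hf.1, hf.2⟩
  · intro f _ g _ h
    funext v
    have := congrFun h (σ.symm v)
    simpa using this
  · intro g hg
    simp only [mem_filter] at hg
    refine ⟨g ∘ σ.symm, ?_, ?_⟩
    · simp only [mem_filter]
      constructor
      · exact (comp_mem_labelings n σ.symm g).mpr hg.1
      · convert hg.2 using 2; funext v; simp
    · funext v; simp

-- step 3
lemma exists_perm {r : ℕ} (g h : Fin r ↪ V) : ∃ σ : Equiv.Perm V, ∀ x, σ (g x) = h x := by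
  classical
  have hc : Fintype.card ((Set.range ⇑g)ᶜ : Set V) = Fintype.card ((Set.range ⇑h)ᶜ : Set V) := by
    rw [Fintype.card_compl_set, Fintype.card_compl_set, Set.card_range_of_injective g.injective,
      Set.card_range_of_injective h.injective]
  let cEquiv := Fintype.equivOfCardEq hc
  refine ⟨(Equiv.Set.sumCompl (Set.range ⇑g)).symm.trans
    ((Equiv.sumCongr (g.toEquivRange.symm.trans h.toEquivRange) cEquiv).trans
      (Equiv.Set.sumCompl (Set.range ⇑h))), fun x => ?_⟩
  have hmem : (g x : V) ∈ Set.range ⇑g := Set.mem_range_self x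
  rw [Equiv.trans_apply, Equiv.trans_apply, Equiv.Set.sumCompl_symm_apply_of_mem hmem]
  simp

-- step 4: constancy over embeddings
lemma card_event_const (n : Fin K → ℕ) {r : ℕ} (Q : (Fin r → Fin K) → Prop) [DecidablePred Q]
    (g h : Fin r ↪ V) :
    ((labelings (V:=V) n).filter fun f => Q (f ∘ g)).card
      = ((labelings (V:=V) n).filter fun f => Q (f ∘ h)).card := by
  obtain ⟨σ, hσ⟩ := exists_perm h g
  have := card_filter_comp n σ (fun f => Q (f ∘ h))
  rw [← this]
  congr 1
  apply Finset.filter_congr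
  intro f _
  have : (f ∘ σ) ∘ ⇑h = f ∘ ⇑g := by funext x; simp [hσ x]
  rw [this]

-- step 5: master
lemma master (n : Fin K → ℕ) {r : ℕ} (Q : (Fin r → Fin K) → Prop) [DecidablePred Q]
    (g : Fin r ↪ V) :
    (Fintype.card (Fin r ↪ V)) * ((labelings (V:=V) n).filter fun f => Q (f ∘ g)).card
      = ∑ f ∈ labelings (V:=V) n, ((univ : Finset (Fin r ↪ V)).filter fun h => Q (fun x => f (h x))).card := by
  classical
  have : (Fintype.card (Fin r ↪ V)) * ((labelings (V:=V) n).filter fun f => Q (f ∘ g)).card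
      = ∑ h : Fin r ↪ V, ((labelings (V:=V) n).filter fun f => Q (f ∘ h)).card := by
    rw [Finset.sum_congr rfl (fun h _ => (card_event_const n Q h g))]
    rw [Finset.sum_const, smul_eq_mul, Finset.card_univ]
  rw [this]
  simp only [Finset.card_filter]
  rw [Finset.sum_comm]
  rfl

lemma inj2 {a b : V} (hab : a ≠ b) : Function.Injective ![a, b] := by
  intro x y h
  fin_cases x <;> fin_cases y <;> simp_all

lemma inj4 {a b c d : V} (hab : a ≠ b) (hac : a ≠ c) (had : a ≠ d) (hbc : b ≠ c)
    (hbd : b ≠ d) (hcd : c ≠ d) : Function.Injective ![a, b, c, d] := by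
  intro x y h
  fin_cases x <;> fin_cases y <;> simp_all

lemma count2 (n : Fin K → ℕ) (f : V → Fin K) (hf : f ∈ labelings (V:=V) n) (i : Fin K) :
    ((univ : Finset (Fin 2 ↪ V)).filter fun h => f (h 0) = i ∧ f (h 1) = i).card
      = n i * (n i - 1) := by
  have key : ((univ : Finset (Fin 2 ↪ V)).filter fun h => f (h 0) = i ∧ f (h 1) = i).card
      = ((univ.filter fun x => f x = i) : Finset V).offDiag.card := by
    apply Finset.card_bij (fun h _ => ((h 0 : V), (h 1 : V)))
    · intro h hh
      simp only [Finset.mem_filter, Finset.mem_univ, true_and] at hh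
      simp only [Finset.mem_offDiag, Finset.mem_filter, Finset.mem_univ, true_and]
      exact ⟨hh.1, hh.2, fun e => absurd (h.injective e) (by decide)⟩
    · intro h1 _ h2 _ he
      apply Function.Embedding.ext
      intro x
      fin_cases x
      · exact congrArg Prod.fst he
      · exact congrArg Prod.snd he
    · intro p hp
      simp only [Finset.mem_offDiag, Finset.mem_filter, Finset.mem_univ, true_and] at hp
      refine ⟨⟨![p.1, p.2], inj2 hp.2.2⟩, ?_, ?_⟩
      · simp only [Finset.mem_filter, Finset.mem_univ, true_and,
          Function.Embedding.coeFn_mk]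
        exact ⟨hp.1, hp.2.1⟩
      · simp
  rw [key, Finset.offDiag_card]
  simp only [labelings, mem_filter, mem_univ, true_and] at hf
  rw [hf i, Nat.mul_sub]
  ring_nf

lemma count4 (n : Fin K → ℕ) (f : V → Fin K) (hf : f ∈ labelings (V:=V) n) (i j : Fin K)
    (hij : i ≠ j) :
    ((univ : Finset (Fin 4 ↪ V)).filter fun h =>
        (f (h 0) = i ∧ f (h 1) = i) ∧ (f (h 2) = j ∧ f (h 3) = j)).card
      = (n i * (n i - 1)) * (n j * (n j - 1)) := by
  have key : ((univ : Finset (Fin 4 ↪ V)).filter fun h =>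
        (f (h 0) = i ∧ f (h 1) = i) ∧ (f (h 2) = j ∧ f (h 3) = j)).card
      = (((univ.filter fun x => f x = i) : Finset V).offDiag
          ×ˢ ((univ.filter fun x => f x = j) : Finset V).offDiag).card := by
    apply Finset.card_bij (fun h _ => (((h 0 : V), (h 1 : V)), ((h 2 : V), (h 3 : V))))
    · intro h hh
      simp only [Finset.mem_filter, Finset.mem_univ, true_and] at hh
      simp only [Finset.mem_product, Finset.mem_offDiag, Finset.mem_filter, Finset.mem_univ,
        true_and]
      exact ⟨⟨hh.1.1, hh.1.2, fun e => absurd (h.injective e) (by decide)⟩,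
        ⟨hh.2.1, hh.2.2, fun e => absurd (h.injective e) (by decide)⟩⟩
    · intro h1 _ h2 _ he
      simp only [Prod.ext_iff] at he
      apply Function.Embedding.ext
      intro x
      fin_cases x
      · exact he.1.1
      · exact he.1.2
      · exact he.2.1
      · exact he.2.2
    · intro p hp
      simp only [Finset.mem_product, Finset.mem_offDiag, Finset.mem_filter, Finset.mem_univ,
        true_and] at hp
      obtain ⟨⟨ha, hb, hab⟩, ⟨hc, hd, hcd⟩⟩ := hp
      have hac : p.1.1 ≠ p.2.1 := fun e => hij (by rw [← ha, e, hc])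
      have had : p.1.1 ≠ p.2.2 := fun e => hij (by rw [← ha, e, hd])
      have hbc : p.1.2 ≠ p.2.1 := fun e => hij (by rw [← hb, e, hc])
      have hbd : p.1.2 ≠ p.2.2 := fun e => hij (by rw [← hb, e, hd])
      refine ⟨⟨![p.1.1, p.1.2, p.2.1, p.2.2], inj4 hab hac had hbc hbd hcd⟩, ?_, ?_⟩
      · simp only [Finset.mem_filter, Finset.mem_univ, true_and, Function.Embedding.coeFn_mk]
        exact ⟨⟨ha, hb⟩, ⟨hc, hd⟩⟩
      · simp
  rw [key, Finset.card_product, Finset.offDiag_card, Finset.offDiag_card]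
  simp only [labelings, mem_filter, mem_univ, true_and] at hf
  have e1 : ∀ a : ℕ, a * a - a = a * (a - 1) := fun a => by rw [Nat.mul_sub]; ring_nf
  rw [hf i, hf j, e1, e1]

lemma key2 (n : Fin K → ℕ) (i : Fin K) {a b : V} (hab : a ≠ b) :
    (Fintype.card (Fin 2 ↪ V)) * ((labelings (V:=V) n).filter fun f => f a = i ∧ f b = i).card
      = (labelings (V:=V) n).card * (n i * (n i - 1)) := by
  classical
  have hm := master (V:=V) n (fun c : Fin 2 → Fin K => c 0 = i ∧ c 1 = i) ⟨![a, b], inj2 hab⟩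
  have h1 : ((labelings (V:=V) n).filter fun f =>
        (fun c : Fin 2 → Fin K => c 0 = i ∧ c 1 = i) (f ∘ ⇑(⟨![a, b], inj2 hab⟩ : Fin 2 ↪ V))).card
      = ((labelings (V:=V) n).filter fun f => f a = i ∧ f b = i).card := by
    congr 1
  rw [h1] at hm
  rw [hm]
  rw [Finset.sum_congr rfl (fun f hf => count2 n f hf i), Finset.sum_const, smul_eq_mul]

lemma key4 (n : Fin K → ℕ) (i j : Fin K) (hij : i ≠ j) {a b c d : V} (hab : a ≠ b)
    (hac : a ≠ c) (had : a ≠ d) (hbc : b ≠ c) (hbd : b ≠ d) (hcd : c ≠ d) :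
    (Fintype.card (Fin 4 ↪ V)) * ((labelings (V:=V) n).filter fun f =>
        (f a = i ∧ f b = i) ∧ (f c = j ∧ f d = j)).card
      = (labelings (V:=V) n).card * ((n i * (n i - 1)) * (n j * (n j - 1))) := by
  classical
  have hm := master (V:=V) n
    (fun e : Fin 4 → Fin K => (e 0 = i ∧ e 1 = i) ∧ (e 2 = j ∧ e 3 = j))
    ⟨![a, b, c, d], inj4 hab hac had hbc hbd hcd⟩
  have h1 : ((labelings (V:=V) n).filter fun f =>
        (fun e : Fin 4 → Fin K => (e 0 = i ∧ e 1 = i) ∧ (e 2 = j ∧ e 3 = j))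
          (f ∘ ⇑(⟨![a, b, c, d], inj4 hab hac had hbc hbd hcd⟩ : Fin 4 ↪ V))).card
      = ((labelings (V:=V) n).filter fun f => (f a = i ∧ f b = i) ∧ (f c = j ∧ f d = j)).card := by
    congr 1
  rw [h1] at hm
  rw [hm]
  rw [Finset.sum_congr rfl (fun f hf => count4 n f hf i j hij), Finset.sum_const, smul_eq_mul]

lemma labelings_nonempty (n : Fin K → ℕ) (hsum : ∑ k, n k = Fintype.card V) :
    (labelings (V:=V) n).Nonempty := by
  classical
  have hcard : Fintype.card V = Fintype.card (Σ k : Fin K, Fin (n k)) := by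
    simp [Fintype.card_sigma, hsum]
  obtain e := Fintype.equivOfCardEq hcard
  refine ⟨fun v => (e v).1, ?_⟩
  simp only [labelings, mem_filter, mem_univ, true_and]
  intro k
  have fibEquiv : {s : Σ k : Fin K, Fin (n k) // s.1 = k} ≃ Fin (n k) :=
    { toFun := fun s => Fin.cast (congrArg n s.2) s.1.2
      invFun := fun b => ⟨⟨k, b⟩, rfl⟩
      left_inv := fun s => by
        obtain ⟨⟨k', b⟩, h⟩ := s
        subst h
        rfl
      right_inv := fun b => rfl }
  calc (univ.filter fun v => (e v).1 = k).card
      = Fintype.card {v : V // (e v).1 = k} := (Fintype.card_subtype _).symm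
    _ = Fintype.card {s : Σ k : Fin K, Fin (n k) // s.1 = k} :=
        Fintype.card_congr (e.subtypeEquiv fun v => Iff.rfl)
    _ = n k := by rw [Fintype.card_congr fibEquiv, Fintype.card_fin]

section Edges
variable (G : SimpleGraph V) [DecidableRel G.Adj]

lemma per_edge (n : Fin K → ℕ) (i : Fin K) (e : Sym2 V) (he : e ∈ G.edgeFinset) :
    (Fintype.card (Fin 2 ↪ V)) *
        ((labelings (V:=V) n).filter fun f => Sym2.map f e = s(i, i)).card
      = (labelings (V:=V) n).card * (n i * (n i - 1)) := by
  induction e using Sym2.ind with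
  | _ a b =>
    have hadj : G.Adj a b := by simpa [SimpleGraph.mem_edgeFinset] using he
    have hab : a ≠ b := hadj.ne
    have hpred : ∀ f : V → Fin K, (Sym2.map f s(a, b) = s(i, i)) ↔ (f a = i ∧ f b = i) := by
      intro f
      rw [Sym2.map_pair_eq, Sym2.eq_iff]
      tauto
    rw [Finset.filter_congr fun f _ => hpred f]
    exact key2 n i hab

lemma per_pair_disj (n : Fin K → ℕ) (i j : Fin K) (hij : i ≠ j) (e e' : Sym2 V)
    (he : e ∈ G.edgeFinset) (he' : e' ∈ G.edgeFinset) (hd : ¬ ∃ v, v ∈ e ∧ v ∈ e') :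
    (Fintype.card (Fin 4 ↪ V)) *
        ((labelings (V:=V) n).filter fun f =>
          Sym2.map f e = s(i, i) ∧ Sym2.map f e' = s(j, j)).card
      = (labelings (V:=V) n).card * ((n i * (n i - 1)) * (n j * (n j - 1))) := by
  induction e using Sym2.ind with
  | _ a b =>
  induction e' using Sym2.ind with
  | _ c d =>
    push_neg at hd
    have hadj : G.Adj a b := by simpa [SimpleGraph.mem_edgeFinset] using he
    have hadj' : G.Adj c d := by simpa [SimpleGraph.mem_edgeFinset] using he'
    have hab : a ≠ b := hadj.ne
    have hcd : c ≠ d := hadj'.ne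
    have hac : a ≠ c := fun h => hd a (by simp) (by simp [h])
    have had : a ≠ d := fun h => hd a (by simp) (by simp [h])
    have hbc : b ≠ c := fun h => hd b (by simp) (by simp [h])
    have hbd : b ≠ d := fun h => hd b (by simp) (by simp [h])
    have hpred : ∀ f : V → Fin K,
        (Sym2.map f s(a, b) = s(i, i) ∧ Sym2.map f s(c, d) = s(j, j))
          ↔ ((f a = i ∧ f b = i) ∧ (f c = j ∧ f d = j)) := by
      intro f
      rw [Sym2.map_pair_eq, Sym2.map_pair_eq, Sym2.eq_iff, Sym2.eq_iff]
      tauto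
    rw [Finset.filter_congr fun f _ => hpred f]
    exact key4 n i j hij hab hac had hbc hbd hcd

lemma per_pair_int (n : Fin K → ℕ) (i j : Fin K) (hij : i ≠ j) (e e' : Sym2 V)
    (hd : ∃ v, v ∈ e ∧ v ∈ e') :
    ((labelings (V:=V) n).filter fun f =>
        Sym2.map f e = s(i, i) ∧ Sym2.map f e' = s(j, j)).card = 0 := by
  rw [Finset.card_eq_zero, Finset.filter_eq_empty_iff]
  rintro f _ ⟨h1, h2⟩
  obtain ⟨v, hv1, hv2⟩ := hd
  have m1 : f v ∈ Sym2.map f e := Sym2.mem_map.mpr ⟨v, hv1, rfl⟩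
  have m2 : f v ∈ Sym2.map f e' := Sym2.mem_map.mpr ⟨v, hv2, rfl⟩
  rw [h1] at m1
  rw [h2] at m2
  simp only [Sym2.mem_iff, or_self] at m1 m2
  exact hij (m1 ▸ m2 ▸ rfl)

end Edges

section Sums
variable (G : SimpleGraph V) [DecidableRel G.Adj]

lemma sumX (n : Fin K → ℕ) (i : Fin K) :
    (Fintype.card (Fin 2 ↪ V)) * (∑ f ∈ labelings (V:=V) n, Rcount G f i i)
      = G.edgeFinset.card * ((labelings (V:=V) n).card * (n i * (n i - 1))) := by
  have h1 : ∑ f ∈ labelings (V:=V) n, Rcount G f i i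
      = ∑ e ∈ G.edgeFinset,
          ((labelings (V:=V) n).filter fun f => Sym2.map f e = s(i, i)).card := by
    simp only [Rcount, Finset.card_filter]
    rw [Finset.sum_comm]
  rw [h1, Finset.mul_sum,
    Finset.sum_congr rfl (fun e he => per_edge G n i e he), Finset.sum_const, smul_eq_mul]

lemma sumXY (n : Fin K → ℕ) (i j : Fin K) (hij : i ≠ j) :
    (Fintype.card (Fin 4 ↪ V)) * (∑ f ∈ labelings (V:=V) n, Rcount G f i i * Rcount G f j j)
      = ((G.edgeFinset ×ˢ G.edgeFinset).filter fun p =>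
            ¬ ∃ v, v ∈ p.1 ∧ v ∈ p.2).card
          * ((labelings (V:=V) n).card * ((n i * (n i - 1)) * (n j * (n j - 1)))) := by
  classical
  have hprod : ∀ f : V → Fin K, Rcount G f i i * Rcount G f j j
      = ∑ p ∈ G.edgeFinset ×ˢ G.edgeFinset,
          (if Sym2.map f p.1 = s(i, i) ∧ Sym2.map f p.2 = s(j, j) then 1 else 0) := by
    intro f
    simp only [Rcount, Finset.card_filter]
    rw [Finset.sum_mul_sum, Finset.sum_product]
    apply Finset.sum_congr rfl
    intro e _
    apply Finset.sum_congr rfl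
    intro e' _
    by_cases h1 : Sym2.map f e = s(i, i) <;> by_cases h2 : Sym2.map f e' = s(j, j) <;>
      simp [h1, h2]
  have h1 : ∑ f ∈ labelings (V:=V) n, Rcount G f i i * Rcount G f j j
      = ∑ p ∈ G.edgeFinset ×ˢ G.edgeFinset,
          ((labelings (V:=V) n).filter fun f =>
            Sym2.map f p.1 = s(i, i) ∧ Sym2.map f p.2 = s(j, j)).card := by
    rw [Finset.sum_congr rfl (fun f _ => hprod f), Finset.sum_comm]
    apply Finset.sum_congr rfl
    intro p _
    rw [Finset.card_filter]
  rw [h1, Finset.mul_sum]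
  rw [← Finset.sum_filter_add_sum_filter_not (G.edgeFinset ×ˢ G.edgeFinset)
    (fun p => ∃ v, v ∈ p.1 ∧ v ∈ p.2)]
  have hz : ∑ p ∈ (G.edgeFinset ×ˢ G.edgeFinset).filter (fun p => ∃ v, v ∈ p.1 ∧ v ∈ p.2),
      (Fintype.card (Fin 4 ↪ V)) * ((labelings (V:=V) n).filter fun f =>
        Sym2.map f p.1 = s(i, i) ∧ Sym2.map f p.2 = s(j, j)).card = 0 := by
    apply Finset.sum_eq_zero
    intro p hp
    rw [per_pair_int n i j hij p.1 p.2 (Finset.mem_filter.mp hp).2, Nat.mul_zero]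
  rw [hz, zero_add]
  have hc : ∀ p ∈ (G.edgeFinset ×ˢ G.edgeFinset).filter (fun p => ¬ ∃ v, v ∈ p.1 ∧ v ∈ p.2),
      (Fintype.card (Fin 4 ↪ V)) * ((labelings (V:=V) n).filter fun f =>
        Sym2.map f p.1 = s(i, i) ∧ Sym2.map f p.2 = s(j, j)).card
      = (labelings (V:=V) n).card * ((n i * (n i - 1)) * (n j * (n j - 1))) := by
    intro p hp
    rw [Finset.mem_filter, Finset.mem_product] at hp
    exact per_pair_disj G n i j hij p.1 p.2 hp.1.1 hp.1.2 hp.2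
  rw [Finset.sum_congr rfl hc, Finset.sum_const, smul_eq_mul]

end Sums

section Pairs
variable (G : SimpleGraph V) [DecidableRel G.Adj]

lemma incidence_filter (t : V) : G.incidenceFinset t = G.edgeFinset.filter (t ∈ ·) := by
  ext e
  simp [SimpleGraph.mem_incidenceFinset, SimpleGraph.incidenceSet, SimpleGraph.mem_edgeFinset]

lemma pairs_count :
    ((G.edgeFinset ×ˢ G.edgeFinset).filter fun p => ∃ v, v ∈ p.1 ∧ v ∈ p.2).card
        + G.edgeFinset.card
      = ∑ t : V, G.degree t ^ 2 := by
  classical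
  set E := G.edgeFinset with hE
  have hdeg : ∀ t : V, G.degree t ^ 2
      = ((E ×ˢ E).filter fun p => t ∈ p.1 ∧ t ∈ p.2).card := by
    intro t
    rw [← G.card_incidenceFinset_eq_degree t, incidence_filter, sq, ← Finset.card_product]
    congr 1
    exact (Finset.filter_product _ _).symm
  have hswap : ∑ t : V, G.degree t ^ 2
      = ∑ p ∈ E ×ˢ E, (univ.filter fun t => t ∈ p.1 ∧ t ∈ p.2).card := by
    rw [Finset.sum_congr rfl (fun t _ => hdeg t)]
    simp only [Finset.card_filter]
    rw [Finset.sum_comm]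
  rw [hswap]
  rw [← Finset.sum_filter_add_sum_filter_not (E ×ˢ E) (fun p => ∃ v, v ∈ p.1 ∧ v ∈ p.2)]
  have hz : ∑ p ∈ (E ×ˢ E).filter (fun p => ¬ ∃ v, v ∈ p.1 ∧ v ∈ p.2),
      (univ.filter fun t => t ∈ p.1 ∧ t ∈ p.2).card = 0 := by
    apply Finset.sum_eq_zero
    intro p hp
    have := (Finset.mem_filter.mp hp).2
    rw [Finset.card_eq_zero, Finset.filter_eq_empty_iff]
    intro t _
    exact fun h => this ⟨t, h⟩
  rw [hz, add_zero]
  have hdiag2 : ∀ e : Sym2 V, e ∈ E →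
      (univ.filter fun t => t ∈ e ∧ t ∈ e).card = 2 := by
    intro e he
    have hnd : ¬ e.IsDiag := SimpleGraph.not_isDiag_of_mem_edgeFinset he
    induction e using Sym2.ind with
    | _ a b =>
      have hab : a ≠ b := by simpa using hnd
      have hset : (univ.filter fun t => t ∈ s(a, b) ∧ t ∈ s(a, b)) = {a, b} := by
        ext t
        simp [Sym2.mem_iff]
      rw [hset, Finset.card_insert_of_notMem (by simpa using hab), Finset.card_singleton]
  have hcount : ∀ p ∈ (E ×ˢ E).filter (fun p => ∃ v, v ∈ p.1 ∧ v ∈ p.2),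
      (univ.filter fun t => t ∈ p.1 ∧ t ∈ p.2).card
        = 1 + (if p.1 = p.2 then 1 else 0) := by
    intro p hp
    rw [Finset.mem_filter, Finset.mem_product] at hp
    obtain ⟨⟨hp1, hp2⟩, v, hv1, hv2⟩ := hp
    by_cases hdiag : p.1 = p.2
    · rw [if_pos hdiag, ← hdiag]
      exact hdiag2 p.1 hp1
    · rw [if_neg hdiag]
      have huniq : (univ.filter fun t => t ∈ p.1 ∧ t ∈ p.2) = {v} := by
        ext t
        simp only [Finset.mem_filter, Finset.mem_univ, true_and, Finset.mem_singleton]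
        constructor
        · rintro ⟨ht1, ht2⟩
          by_contra htv
          exact hdiag (((Sym2.mem_and_mem_iff htv).mp ⟨ht1, hv1⟩).trans
            ((Sym2.mem_and_mem_iff htv).mp ⟨ht2, hv2⟩).symm)
        · rintro rfl; exact ⟨hv1, hv2⟩
      rw [huniq, Finset.card_singleton]
  rw [Finset.sum_congr rfl hcount, Finset.sum_add_distrib, Finset.sum_const, smul_eq_mul,
    mul_one]
  congr 1
  rw [← Finset.card_filter]
  apply Finset.card_bij (fun (e : Sym2 V) (_ : e ∈ E) => ((e, e) : Sym2 V × Sym2 V))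
  · intro e he
    simp only [Finset.mem_filter, Finset.mem_product]
    exact ⟨⟨⟨he, he⟩, ⟨e.out.1, Sym2.out_fst_mem e, Sym2.out_fst_mem e⟩⟩, trivial⟩
  · intro e1 _ e2 _ h
    exact congrArg Prod.fst h
  · intro p hp
    simp only [Finset.mem_filter, Finset.mem_product] at hp
    obtain ⟨⟨⟨h1, _⟩, _⟩, hd⟩ := hp
    exact ⟨p.1, h1, by rw [Prod.ext_iff]; exact ⟨rfl, hd⟩⟩

end Pairs

lemma covar_eq (n : Fin K → ℕ) (X Y : (V → Fin K) → ℝ)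
    (hL : (((labelings (V:=V) n).card : ℝ)) ≠ 0) :
    covar n X Y = _root_.expect n (fun f => X f * Y f) - _root_.expect n X * _root_.expect n Y := by
  simp only [covar, _root_.expect]
  set L : ℝ := (((labelings (V:=V) n).card : ℝ)) with hLdef
  set a : ℝ := (∑ f ∈ labelings (V:=V) n, X f) / L with ha
  set b : ℝ := (∑ f ∈ labelings (V:=V) n, Y f) / L with hb
  have hexp : ∑ f ∈ labelings (V:=V) n, (X f - a) * (Y f - b)
      = (∑ f ∈ labelings (V:=V) n, X f * Y f) - a * (∑ f ∈ labelings (V:=V) n, Y f)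
        - b * (∑ f ∈ labelings (V:=V) n, X f) + ((labelings (V:=V) n).card : ℝ) * (a * b) := by
    rw [Finset.sum_congr rfl (fun f _ => show (X f - a) * (Y f - b)
      = X f * Y f - a * Y f - b * X f + a * b from by ring)]
    rw [Finset.sum_add_distrib, Finset.sum_sub_distrib, Finset.sum_sub_distrib,
      ← Finset.mul_sum, ← Finset.mul_sum, Finset.sum_const, nsmul_eq_mul]
  rw [hexp]
  have haL : a * L = ∑ f ∈ labelings (V:=V) n, X f := by
    rw [ha]; field_simp
  have hbL : b * L = ∑ f ∈ labelings (V:=V) n, Y f := by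
    rw [hb]; field_simp
  rw [← haL, ← hbL, ← hLdef]
  field_simp
  ring

lemma cast_pred (a : ℕ) : ((a * (a - 1) : ℕ) : ℝ) = (a : ℝ) * ((a : ℝ) - 1) := by
  cases a with
  | zero => simp
  | succ k => push_cast [Nat.succ_sub_one]; ring


theorem stmt_10 (G : SimpleGraph V) [DecidableRel G.Adj]
    (n : Fin K → ℕ) (N : ℕ) (hN : N = Fintype.card V) (hN4 : 4 ≤ N)
    (hsum : ∑ k, n k = N) (i j : Fin K) (hij : i ≠ j)
    (m D : ℝ) (hm : m = (G.edgeFinset.card : ℝ))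
    (hD : D = ∑ t : V, (G.degree t : ℝ) ^ 2) :
    covar n (fun f : V → Fin K => (Rcount G f i i : ℝ))
        (fun f : V → Fin K => (Rcount G f j j : ℝ))
      = (m ^ 2 - D + m) * ((n i : ℝ) * (n j : ℝ) * ((n i : ℝ) - 1) * ((n j : ℝ) - 1)
            / ((N : ℝ) * ((N : ℝ) - 1) * ((N : ℝ) - 2) * ((N : ℝ) - 3)))
        - (m * (n i : ℝ) * ((n i : ℝ) - 1) / ((N : ℝ) * ((N : ℝ) - 1)))
          * (m * (n j : ℝ) * ((n j : ℝ) - 1) / ((N : ℝ) * ((N : ℝ) - 1))) := by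
  classical
  have hsum' : ∑ k, n k = Fintype.card V := by rw [hsum, hN]
  have hne := labelings_nonempty (V := V) n hsum'
  have hL0 : (((labelings (V:=V) n).card : ℝ)) ≠ 0 :=
    Nat.cast_ne_zero.mpr (Finset.card_pos.mpr hne).ne'
  have hNr : (4 : ℝ) ≤ (N : ℝ) := by exact_mod_cast hN4
  have hN0 : (N : ℝ) ≠ 0 := by nlinarith
  have hN1 : (N : ℝ) - 1 ≠ 0 := by nlinarith
  have hN2 : (N : ℝ) - 2 ≠ 0 := by nlinarith
  have hN3 : (N : ℝ) - 3 ≠ 0 := by nlinarith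
  have hNN0 : (N : ℝ) * ((N : ℝ) - 1) ≠ 0 := mul_ne_zero hN0 hN1
  have hNNNN0 : (N : ℝ) * ((N : ℝ) - 1) * ((N : ℝ) - 2) * ((N : ℝ) - 3) ≠ 0 :=
    mul_ne_zero (mul_ne_zero hNN0 hN2) hN3
  -- cast of embedding cardinalities
  have hc2 : ((Fintype.card (Fin 2 ↪ V) : ℕ) : ℝ) = (N : ℝ) * ((N : ℝ) - 1) := by
    rw [Fintype.card_embedding_eq, Fintype.card_fin, ← hN,
      show N.descFactorial 2 = (N - 1) * N from by simp [Nat.descFactorial]]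
    push_cast [Nat.cast_sub (show 1 ≤ N by omega)]
    ring
  have hc4 : ((Fintype.card (Fin 4 ↪ V) : ℕ) : ℝ)
      = (N : ℝ) * ((N : ℝ) - 1) * ((N : ℝ) - 2) * ((N : ℝ) - 3) := by
    rw [Fintype.card_embedding_eq, Fintype.card_fin, ← hN,
      show N.descFactorial 4 = (N - 3) * ((N - 2) * ((N - 1) * N)) from by
        simp [Nat.descFactorial, Nat.mul_assoc]]
    push_cast [Nat.cast_sub (show 1 ≤ N by omega), Nat.cast_sub (show 2 ≤ N by omega),
      Nat.cast_sub (show 3 ≤ N by omega)]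
    ring
  -- expectation of X
  have hEX : ∀ k : Fin K, _root_.expect (V:=V) n (fun f => (Rcount G f k k : ℝ))
      = m * (n k : ℝ) * ((n k : ℝ) - 1) / ((N : ℝ) * ((N : ℝ) - 1)) := by
    intro k
    have h0 : ((Fintype.card (Fin 2 ↪ V) * (∑ f ∈ labelings (V:=V) n, Rcount G f k k) : ℕ) : ℝ)
        = ((G.edgeFinset.card * ((labelings (V:=V) n).card * (n k * (n k - 1))) : ℕ) : ℝ) := by
      exact_mod_cast congrArg (fun x : ℕ => (x : ℝ)) (sumX G n k)
    rw [Nat.cast_mul, Nat.cast_mul, Nat.cast_mul, cast_pred, hc2] at h0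
    rw [_root_.expect]
    have hcast : ∑ f ∈ labelings (V:=V) n, ((Rcount G f k k : ℕ) : ℝ)
        = ((∑ f ∈ labelings (V:=V) n, Rcount G f k k : ℕ) : ℝ) := by
      rw [Nat.cast_sum]
    rw [hcast, div_eq_div_iff hL0 hNN0]
    rw [hm]
    linear_combination h0
  -- expectation of X * Y
  set Pd := ((G.edgeFinset ×ˢ G.edgeFinset).filter fun p =>
      ¬ ∃ v, v ∈ p.1 ∧ v ∈ p.2) with hPddef
  have hPd : ((Pd.card : ℕ) : ℝ) = m ^ 2 - D + m := by
    have hsplit : ((G.edgeFinset ×ˢ G.edgeFinset).filter fun p =>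
          ∃ v, v ∈ p.1 ∧ v ∈ p.2).card + Pd.card
        = G.edgeFinset.card * G.edgeFinset.card := by
      rw [hPddef, Finset.card_filter_add_card_filter_not, Finset.card_product]
    have hint := pairs_count G
    have hsplit' : (((G.edgeFinset ×ˢ G.edgeFinset).filter fun p =>
          ∃ v, v ∈ p.1 ∧ v ∈ p.2).card : ℝ) + (Pd.card : ℝ) = m ^ 2 := by
      rw [hm, sq]; exact_mod_cast congrArg (fun x : ℕ => (x : ℝ)) hsplit
    have hint' : (((G.edgeFinset ×ˢ G.edgeFinset).filter fun p =>
          ∃ v, v ∈ p.1 ∧ v ∈ p.2).card : ℝ) + m = D := by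
      rw [hm, hD]
      exact_mod_cast congrArg (fun x : ℕ => (x : ℝ)) hint
    linarith
  have hEXY : _root_.expect (V:=V) n (fun f => (Rcount G f i i : ℝ) * (Rcount G f j j : ℝ))
      = (m ^ 2 - D + m) * ((n i : ℝ) * ((n i : ℝ) - 1) * ((n j : ℝ) * ((n j : ℝ) - 1)))
          / ((N : ℝ) * ((N : ℝ) - 1) * ((N : ℝ) - 2) * ((N : ℝ) - 3)) := by
    have h0 : ((Fintype.card (Fin 4 ↪ V)
          * (∑ f ∈ labelings (V:=V) n, Rcount G f i i * Rcount G f j j) : ℕ) : ℝ)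
        = ((Pd.card * ((labelings (V:=V) n).card
            * ((n i * (n i - 1)) * (n j * (n j - 1)))) : ℕ) : ℝ) := by
      exact_mod_cast congrArg (fun x : ℕ => (x : ℝ)) (sumXY G n i j hij)
    rw [Nat.cast_mul, Nat.cast_mul, Nat.cast_mul, Nat.cast_mul, cast_pred, cast_pred, hc4, hPd] at h0
    rw [_root_.expect]
    have hcast : ∑ f ∈ labelings (V:=V) n, ((Rcount G f i i : ℕ) : ℝ) * ((Rcount G f j j : ℕ) : ℝ)
        = ((∑ f ∈ labelings (V:=V) n, Rcount G f i i * Rcount G f j j : ℕ) : ℝ) := by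
      rw [Nat.cast_sum]
      exact Finset.sum_congr rfl fun f _ => (Nat.cast_mul _ _).symm
    rw [hcast, div_eq_div_iff hL0 hNNNN0]
    linear_combination h0
  rw [covar_eq n _ _ hL0, hEXY, hEX i, hEX j]
  field_simp
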